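/- Consider x(t+1) = A x(t) + B u(t) with box constraints X on the state and U on the input. Given {β(t), Φ(t)} for t = 0,…,T−1 such that for all t ≤ T the state constraints Aᵗα + Σ_{s<t} A^{t-1-s}Bβ(s) ∓ |AᵗGΓ + Σ_{s<t} A^{t-1-s}BΦ(s)|·1 satisfy the elementwise bounds x̲, x̄, and the input constraints β(t) ∓ |Φ(t)|·1 satisfy u̲, ū, then the zonotope I = ⟨α | GΓ⟩ is contained in the finite-horizon viability kernel Viab_{[0,T]}(X): for every x(0) ∈ I there is an admissible control signal u(·) with u(t) ∈ U keeping x(t) ∈ X for all t = 0,…,T. -/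

import Mathlib

open Matrix Finset

lemma abs_mulVec_le {d m : ℕ} (M : Matrix (Fin d) (Fin m) ℝ) (lam : Fin m → ℝ)
    (h : ∀ i, |lam i| ≤ 1) (j : Fin d) : |M.mulVec lam j| ≤ ∑ i, |M j i| := by
  calc |M.mulVec lam j| = |∑ i, M j i * lam i| := by
        simp [Matrix.mulVec, dotProduct]
    _ ≤ ∑ i, |M j i * lam i| := Finset.abs_sum_le_sum_abs _ _
    _ ≤ ∑ i, |M j i| := Finset.sum_le_sum fun i _ => by
        rw [abs_mul]
        nlinarith [abs_nonneg (M j i), h i, abs_nonneg (lam i)]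

lemma mv_sum {d e : ℕ} (A : Matrix (Fin d) (Fin e) ℝ) {ι : Type*} (S : Finset ι)
    (v : ι → Fin e → ℝ) :
    A.mulVec (∑ s ∈ S, v s) = ∑ s ∈ S, A.mulVec (v s) := by
  simp only [← Matrix.mulVecLin_apply, map_sum]

lemma sum_mv {d e : ℕ} {ι : Type*} (S : Finset ι) (M : ι → Matrix (Fin d) (Fin e) ℝ)
    (v : Fin e → ℝ) :
    (∑ s ∈ S, M s).mulVec v = ∑ s ∈ S, (M s).mulVec v := by
  classical
  induction S using Finset.induction with
  | empty => simp [Matrix.zero_mulVec]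
  | insert a s h ih => simp [Finset.sum_insert h, Matrix.add_mulVec, ih]

theorem viable_set_no_disturbance
    (dx du n : ℕ)
    (A : Matrix (Fin dx) (Fin dx) ℝ) (B : Matrix (Fin dx) (Fin du) ℝ)
    (xlo xhi : Fin dx → ℝ) (ulo uhi : Fin du → ℝ)
    (α : Fin dx → ℝ) (G : Matrix (Fin dx) (Fin n) ℝ) (γ : Fin n → ℝ)
    (β : ℕ → Fin du → ℝ) (Φ : ℕ → Matrix (Fin du) (Fin n) ℝ)
    (T : ℕ)
    (hγ : ∀ i, 0 ≤ γ i)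
    (hstate : ∀ t ≤ T, ∀ j : Fin dx,
      xlo j ≤ ((A ^ t).mulVec α +
            ∑ s ∈ Finset.range t, ((A ^ (t - 1 - s)) * B).mulVec (β s)) j -
          ∑ i, |((A ^ t) * G * Matrix.diagonal γ +
            ∑ s ∈ Finset.range t, (A ^ (t - 1 - s)) * B * Φ s) j i| ∧
      ((A ^ t).mulVec α +
            ∑ s ∈ Finset.range t, ((A ^ (t - 1 - s)) * B).mulVec (β s)) j +
          ∑ i, |((A ^ t) * G * Matrix.diagonal γ +
            ∑ s ∈ Finset.range t, (A ^ (t - 1 - s)) * B * Φ s) j i| ≤ xhi j)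
    (hinput : ∀ t ≤ T, ∀ j : Fin du,
      ulo j ≤ β t j - ∑ i, |(Φ t) j i| ∧ β t j + ∑ i, |(Φ t) j i| ≤ uhi j) :
    ∀ x₀ : Fin dx → ℝ,
      (∃ lam : Fin n → ℝ, (∀ i, |lam i| ≤ 1) ∧
          x₀ = α + (G * Matrix.diagonal γ).mulVec lam) →
      ∃ u : ℕ → Fin du → ℝ, ∃ x : ℕ → Fin dx → ℝ,
        x 0 = x₀ ∧
        (∀ t, x (t + 1) = A.mulVec (x t) + B.mulVec (u t)) ∧
        (∀ t ≤ T, ∀ j : Fin du, ulo j ≤ u t j ∧ u t j ≤ uhi j) ∧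
        (∀ t ≤ T, ∀ j : Fin dx, xlo j ≤ x t j ∧ x t j ≤ xhi j) := by
  rintro x₀ ⟨lam, hlam, hx₀⟩
  refine ⟨fun t => β t + (Φ t).mulVec lam,
    fun t => ((A ^ t).mulVec α +
        ∑ s ∈ Finset.range t, ((A ^ (t - 1 - s)) * B).mulVec (β s)) +
      ((A ^ t) * G * Matrix.diagonal γ +
        ∑ s ∈ Finset.range t, (A ^ (t - 1 - s)) * B * Φ s).mulVec lam,
    ?_, ?_, ?_, ?_⟩
  · simp [hx₀]
  · intro t
    have hpow : ∀ s ∈ Finset.range t, A ^ (t - s) = A * A ^ (t - 1 - s) := by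
      intro s hs
      rw [← pow_succ']
      congr 1
      have := Finset.mem_range.mp hs
      omega
    have e2 : ∑ s ∈ Finset.range t, ((A ^ (t - s)) * B).mulVec (β s)
        = ∑ s ∈ Finset.range t, (A * ((A ^ (t - 1 - s)) * B)).mulVec (β s) :=
      Finset.sum_congr rfl fun s hs => by rw [hpow s hs, Matrix.mul_assoc]
    have e3 : ∑ s ∈ Finset.range t, (A ^ (t - s)) * B * Φ s
        = ∑ s ∈ Finset.range t, A * ((A ^ (t - 1 - s)) * B * Φ s) :=
      Finset.sum_congr rfl fun s hs => by rw [hpow s hs, Matrix.mul_assoc, Matrix.mul_assoc, ← Matrix.mul_assoc (A ^ (t - 1 - s))]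
    simp only [Nat.add_sub_cancel, Finset.sum_range_succ, Nat.sub_self, pow_zero, one_mul,
      e2, e3, pow_succ']
    simp only [Matrix.mulVec_add, Matrix.add_mulVec, mv_sum, sum_mv, Matrix.mulVec_mulVec,
      Matrix.mul_add, Matrix.mul_sum, Matrix.mul_assoc, Matrix.one_mul]
    abel
  · intro t ht j
    have h1 := abs_mulVec_le (Φ t) lam hlam j
    have h2 := hinput t ht j
    constructor
    · have : -( ∑ i, |(Φ t) j i|) ≤ (Φ t).mulVec lam j := by
        have := abs_le.mp (abs_le.mpr ⟨neg_abs_le _, le_abs_self _⟩ : |(Φ t).mulVec lam j| ≤ |(Φ t).mulVec lam j|)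
        linarith [neg_abs_le ((Φ t).mulVec lam j)]
      simp only [Pi.add_apply]
      linarith [h2.1]
    · simp only [Pi.add_apply]
      linarith [h2.2, le_abs_self ((Φ t).mulVec lam j)]
  · intro t ht j
    have h1 := abs_mulVec_le ((A ^ t) * G * Matrix.diagonal γ +
        ∑ s ∈ Finset.range t, (A ^ (t - 1 - s)) * B * Φ s) lam hlam j
    have h2 := hstate t ht j
    simp only [Pi.add_apply] at h2 ⊢
    have hlo := neg_le_of_abs_le h1
    have hhi := le_of_abs_le h1
    constructor
    · linarith [h2.1]
    · linarith [h2.2]
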